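/- Let (X,F) be a transitive Smale space, (Y,f) finitely presented, and π : X → Y a factor map. Suppose there exist a convergent sequence q_n ∈ Y and periodic points p_n, p'_n ∈ X with π(p_n) = π(p'_n) = q_n, p_n ≠ p'_n for all n, and lim p_n = lim p'_n. Then π is infinite-to-one, i.e., some point of Y has infinitely many π-preimages. -/

import Mathlib

open Filter Topology Set

/-- `f` is expansive with expansive constant `c`. -/
def Expansive {X : Type*} [MetricSpace X] (f : Equiv.Perm X) (c : ℝ) : Prop :=
  ∀ p q : X, p ≠ q → ∃ n : ℤ, c < dist ((f ^ n) p) ((f ^ n) q)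

/-- The ε-stable set of `x`. -/
def Ws {X : Type*} [MetricSpace X] (f : Equiv.Perm X) (ε : ℝ) (x : X) : Set X :=
  {y | ∀ n : ℕ, dist ((f ^ (n : ℤ)) x) ((f ^ (n : ℤ)) y) < ε}

/-- The ε-unstable set of `x`. -/
def Wu {X : Type*} [MetricSpace X] (f : Equiv.Perm X) (ε : ℝ) (x : X) : Set X :=
  {y | ∀ n : ℕ, dist ((f ^ (-(n : ℤ))) x) ((f ^ (-(n : ℤ))) y) < ε}

/-- The stable set of `x`. -/
def stableSet {X : Type*} [MetricSpace X] (f : Equiv.Perm X) (x : X) : Set X :=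
  {y | Filter.Tendsto (fun n : ℕ => dist ((f ^ (n : ℤ)) x) ((f ^ (n : ℤ)) y))
    Filter.atTop (nhds 0)}

/-- The unstable set of `x`. -/
def unstableSet {X : Type*} [MetricSpace X] (f : Equiv.Perm X) (x : X) : Set X :=
  {y | Filter.Tendsto (fun n : ℕ => dist ((f ^ (-(n : ℤ))) x) ((f ^ (-(n : ℤ))) y))
    Filter.atTop (nhds 0)}

/-- Canonical coordinates: for all sufficiently small ε > 0 there is δ > 0 such that
points at distance < δ have a unique bracket `[x,y] = W^s_ε(x) ∩ W^u_ε(y)`. -/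
def CanonicalCoords {X : Type*} [MetricSpace X] (f : Equiv.Perm X) : Prop :=
  ∃ ε₀ > 0, ∀ ε : ℝ, 0 < ε → ε ≤ ε₀ → ∃ δ > 0, ∀ x y : X, dist x y < δ →
    ∃! z, z ∈ Ws f ε x ∩ Wu f ε y

/-- A Smale space: an expansive homeomorphism with canonical coordinates. -/
def IsSmale {X : Type*} [MetricSpace X] (f : Equiv.Perm X) : Prop :=
  Continuous (⇑f) ∧ Continuous (⇑f.symm) ∧ (∃ c > 0, Expansive f c) ∧ CanonicalCoords f

/-- Topological transitivity. -/
def TopTransitive {X : Type*} [MetricSpace X] (f : Equiv.Perm X) : Prop :=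
  ∀ U V : Set X, IsOpen U → IsOpen V → U.Nonempty → V.Nonempty →
    ∃ n : ℕ, ((f ^ (n : ℤ)) ⁻¹' U ∩ V).Nonempty

/-- A periodic point of `f`. -/
def IsPeriodicPoint {X : Type*} [MetricSpace X] (f : Equiv.Perm X) (p : X) : Prop :=
  ∃ N : ℕ, 0 < N ∧ (f ^ (N : ℤ)) p = p

/-- A factor map (surjective continuous semiconjugacy). -/
def IsFactorMap {X Y : Type*} [MetricSpace X] [MetricSpace Y]
    (F : Equiv.Perm X) (f : Equiv.Perm Y) (π : X → Y) : Prop :=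
  Continuous π ∧ Function.Surjective π ∧ ∀ x, π (F x) = f (π x)

/-- A map is u-resolving if it is injective on unstable sets. -/
def UResolving {X Y : Type*} [MetricSpace X] (F : Equiv.Perm X) (π : X → Y) : Prop :=
  ∀ x : X, Set.InjOn π (unstableSet F x)

/-- A map is s-resolving if it is injective on stable sets. -/
def SResolving {X Y : Type*} [MetricSpace X] (F : Equiv.Perm X) (π : X → Y) : Prop :=
  ∀ x : X, Set.InjOn π (stableSet F x)

/-- The shift map on bi-infinite sequences. -/
def shiftE (A : Type*) : Equiv.Perm (ℤ → A) where
  toFun x i := x (i + 1)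
  invFun x i := x (i - 1)
  left_inv x := funext fun i => congrArg x (by ring)
  right_inv x := funext fun i => congrArg x (by ring)

/-- The word `w` occurs in the sequence `x`. -/
def OccursIn {A : Type*} {k : ℕ} (w : Fin k → A) (x : ℤ → A) : Prop :=
  ∃ i : ℤ, ∀ j : Fin k, x (i + (j : ℤ)) = w j

/-- A subshift of finite type: the sequences avoiding a finite set of forbidden words. -/
def IsSFT {A : Type*} (S : Set (ℤ → A)) : Prop :=
  ∃ Fw : Set ((k : ℕ) × (Fin k → A)), Fw.Finite ∧
    S = {x | ∀ w ∈ Fw, ¬ OccursIn w.2 x}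

/-- A one-step SFT (vertex shift) with transition rule `T`. -/
def IsOneStepSFTFor {A : Type*} (T : A → A → Prop) (S : Set (ℤ → A)) : Prop :=
  S = {x | ∀ i : ℤ, T (x i) (x (i + 1))}

/-- `S` is invariant under the shift and its inverse. -/
def ShiftInvariant {A : Type*} (S : Set (ℤ → A)) : Prop :=
  (∀ x ∈ S, shiftE A x ∈ S) ∧ (∀ x ∈ S, (shiftE A).symm x ∈ S)

/-- A factor map from the subshift `(S, σ)` onto the system `(Y, f)`. -/
def IsSubshiftFactorMap {A Y : Type*} [TopologicalSpace A] [MetricSpace Y]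
    (S : Set (ℤ → A)) (f : Equiv.Perm Y) (φ : (ℤ → A) → Y) : Prop :=
  ContinuousOn φ S ∧ φ '' S = Set.univ ∧ ∀ x ∈ S, φ (shiftE A x) = f (φ x)

/-- Topological transitivity of the shift restricted to `S`. -/
def SubshiftTransitive {A : Type*} [TopologicalSpace A] (S : Set (ℤ → A)) : Prop :=
  ∀ U V : Set (ℤ → A), IsOpen U → IsOpen V → (U ∩ S).Nonempty → (V ∩ S).Nonempty →
    ∃ n : ℕ, (((shiftE A) ^ (n : ℤ)) ⁻¹' U ∩ V ∩ S).Nonempty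

/-- The stable set of `t` in the subshift `S`: points eventually agreeing with `t`. -/
def shiftStable {A : Type*} (S : Set (ℤ → A)) (t : ℤ → A) : Set (ℤ → A) :=
  {t' ∈ S | ∃ N : ℤ, ∀ i ≥ N, t' i = t i}

/-- A finitely presented system: an expansive system that is a factor of an SFT. -/
def FinitelyPresented {Y : Type*} [MetricSpace Y] (f : Equiv.Perm Y) : Prop :=
  Continuous (⇑f) ∧ Continuous (⇑f.symm) ∧ (∃ c > 0, Expansive f c) ∧
  ∃ (N : ℕ) (S : Set (ℤ → Fin N)), IsSFT S ∧ ShiftInvariant S ∧ S.Nonempty ∧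
    ∃ φ : (ℤ → Fin N) → Y, IsSubshiftFactorMap S f φ

section Aux

private lemma zpow_add_apply {X : Type*} (F : Equiv.Perm X) (a b : ℤ) (x : X) :
    (F ^ (a + b)) x = (F ^ a) ((F ^ b) x) := by
  rw [zpow_add, Equiv.Perm.mul_apply]

private lemma per_mul {X : Type*} (F : Equiv.Perm X) {x : X} {N : ℤ} (h : (F ^ N) x = x) :
    ∀ t : ℤ, (F ^ (t * N)) x = x := by
  have hinv : (F ^ (-N)) x = x := by
    have h2 := zpow_add_apply F (-N) N x
    rw [h] at h2
    simpa using h2.symm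
  intro t
  induction t using Int.induction_on with
  | zero => simp
  | succ k ih =>
      have : ((k : ℤ) + 1) * N = (k : ℤ) * N + N := by ring
      rw [this, zpow_add_apply, h, ih]
  | pred k ih =>
      have : (-(k : ℤ) - 1) * N = -(k : ℤ) * N + -N := by ring
      rw [this, zpow_add_apply, hinv, ih]

private lemma semiconj_zpow {X Y : Type*} (F : Equiv.Perm X) (f : Equiv.Perm Y)
    (π : X → Y) (h : ∀ x, π (F x) = f (π x)) :
    ∀ (k : ℤ) (x : X), π ((F ^ k) x) = (f ^ k) (π x) := by
  have hinv : ∀ x, π (F⁻¹ x) = f⁻¹ (π x) := by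
    intro x
    have h1 := h (F⁻¹ x)
    rw [show ∀ y, F (F⁻¹ y) = y from fun y => (Equiv.eq_symm_apply F).mp rfl] at h1
    have h2 : f⁻¹ (π x) = f⁻¹ (f (π (F⁻¹ x))) := by rw [← h1]
    rw [show ∀ y, f⁻¹ (f y) = y from fun y => Equiv.Perm.inv_eq_iff_eq.mpr rfl] at h2
    exact h2.symm
  intro k
  induction k using Int.induction_on with
  | zero => simp
  | succ k ih =>
      intro x
      have e1 : ((k : ℤ) + 1) = (k : ℤ) + 1 := rfl
      rw [zpow_add_apply F k 1, zpow_one, ih (F x), h x, zpow_add_apply f k 1, zpow_one]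
  | pred k ih =>
      intro x
      have e1 : (-(k : ℤ) - 1) = -(k : ℤ) + (-1) := by ring
      rw [e1, zpow_add_apply F (-k) (-1), zpow_add_apply f (-k) (-1)]
      rw [zpow_neg_one, zpow_neg_one, ih (F⁻¹ x), hinv x]

private lemma eq_of_not_expansive {X : Type*} [MetricSpace X] {c : ℝ} {f : Equiv.Perm X} (hE : Expansive f c)
    {a b : X} (h : ∀ n : ℤ, ¬ c < dist ((f ^ n) a) ((f ^ n) b)) : a = b := by
  by_contra hab
  obtain ⟨n, hn⟩ := hE a b hab
  exact h n hn

end Aux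

/-- If periodic pairs with equal images converge to a common point, then
the factor map from a transitive Smale space to a finitely presented system is
infinite-to-one. -/
theorem stmt2 {X Y : Type*} [MetricSpace X] [CompactSpace X] [MetricSpace Y] [CompactSpace Y]
    (F : Equiv.Perm X) (f : Equiv.Perm Y)
    (hX : IsSmale F) (hXt : TopTransitive F) (hY : FinitelyPresented f)
    (π : X → Y) (hπ : IsFactorMap F f π)
    (q : ℕ → Y) (p p' : ℕ → X) (q₀ : Y) (hq : Filter.Tendsto q Filter.atTop (nhds q₀))
    (hper : ∀ n, IsPeriodicPoint F (p n) ∧ IsPeriodicPoint F (p' n))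
    (hmap : ∀ n, π (p n) = q n ∧ π (p' n) = q n)
    (hne : ∀ n, p n ≠ p' n)
    (L : X) (hp : Filter.Tendsto p Filter.atTop (nhds L))
    (hp' : Filter.Tendsto p' Filter.atTop (nhds L)) :
    ∃ y : Y, (π ⁻¹' {y}).Infinite := by
  obtain ⟨hFc, hFc', ⟨cF, hcF, hEF⟩, ⟨ε₀, hε₀, hcc⟩⟩ := hX
  obtain ⟨hfc, hfc', ⟨cf, hcf, hEf⟩, -⟩ := hY
  obtain ⟨hπc, hπsur, hπsemi⟩ := hπ
  have hsemi := semiconj_zpow F f π hπsemi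
  -- uniform continuity of π
  have hu : UniformContinuous π := CompactSpace.uniformContinuous_of_continuous hπc
  obtain ⟨ε₁, hε₁, hmod⟩ := Metric.uniformContinuous_iff.mp hu cf hcf
  -- choose ε and get δ from canonical coordinates
  set ε : ℝ := min ε₀ (min cF ε₁) with hεdef
  have hε : 0 < ε := lt_min hε₀ (lt_min hcF hε₁)
  have hεcF : ε ≤ cF := le_trans (min_le_right _ _) (min_le_left _ _)
  have hεε₁ : ε ≤ ε₁ := le_trans (min_le_right _ _) (min_le_right _ _)
  obtain ⟨δ, hδ, hbr⟩ := hcc ε hε (min_le_left _ _)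
  -- find n with dist (p n) (p' n) < δ
  have hd : Filter.Tendsto (fun n => dist (p n) (p' n)) Filter.atTop (nhds 0) := by
    have := hp.dist hp'
    simpa using this
  obtain ⟨n, hn⟩ := (hd.eventually (gt_mem_nhds hδ)).exists
  set P := p n with hPdef
  set P' := p' n with hP'def
  have hqq : π P' = π P := by rw [(hmap n).1, (hmap n).2]
  -- common period N
  obtain ⟨⟨N₁, hN₁, hPer1⟩, ⟨N₂, hN₂, hPer2⟩⟩ := hper n
  set N : ℕ := N₁ * N₂ with hNdef
  have hN : 0 < N := Nat.mul_pos hN₁ hN₂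
  have hPN : (F ^ (N : ℤ)) P = P := by
    have := per_mul F hPer1 (N₂ : ℤ)
    have e : ((N : ℕ) : ℤ) = (N₂ : ℤ) * (N₁ : ℤ) := by push_cast [hNdef]; ring
    rwa [e]
  have hP'N : (F ^ (N : ℤ)) P' = P' := by
    have := per_mul F hPer2 (N₁ : ℤ)
    have e : ((N : ℕ) : ℤ) = (N₁ : ℤ) * (N₂ : ℤ) := by push_cast [hNdef]; ring
    rwa [e]
  -- bracket z = [P, P']
  obtain ⟨z, ⟨hzs, hzu⟩, -⟩ := hbr P P' hn
  -- z ≠ P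
  have hzP : z ≠ P := by
    intro hzeq
    subst hzeq
    apply hne n
    apply eq_of_not_expansive hEF
    intro j hj
    -- reduce time j to a nonpositive time using common period N
    set t : ℤ := (j.natAbs : ℤ) with htdef
    have htN : j - t * (N : ℤ) ≤ 0 := by
      have h1 : (1 : ℤ) ≤ (N : ℤ) := by exact_mod_cast hN
      have h2 : j ≤ t := by rw [htdef]; omega
      have h3 : (0 : ℤ) ≤ t := by rw [htdef]; omega
      nlinarith
    set m : ℕ := (t * (N : ℤ) - j).toNat with hmdef
    have hmj : -(m : ℤ) = j - t * (N : ℤ) := by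
      rw [hmdef, Int.toNat_of_nonneg (by omega)]; ring
    have hredP : (F ^ j) (p n) = (F ^ (-(m : ℤ))) (p n) := by
      have : (F ^ j) (p n) = (F ^ ((j - t * (N : ℤ)) + t * (N : ℤ))) (p n) := by
        norm_num
      rw [this, zpow_add_apply, per_mul F hPN t, hmj]
    have hredP' : (F ^ j) (p' n) = (F ^ (-(m : ℤ))) (p' n) := by
      have : (F ^ j) (p' n) = (F ^ ((j - t * (N : ℤ)) + t * (N : ℤ))) (p' n) := by
        norm_num
      rw [this, zpow_add_apply, per_mul F hP'N t, hmj]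
    have hd' := hzu m
    rw [hredP, hredP'] at hj
    have : dist ((F ^ (-(m : ℤ))) (p n)) ((F ^ (-(m : ℤ))) (p' n)) < ε := by
      rw [dist_comm]; exact hd'
    exact absurd hj (not_lt.mpr (le_trans this.le hεcF))
  -- π z = π P
  have hπz : π z = π P := by
    apply eq_of_not_expansive hEf
    intro j hj
    rw [← hsemi j z, ← hsemi j P] at hj
    rcases le_or_gt 0 j with h0 | h0
    · have hdq : dist ((F ^ j) P) ((F ^ j) z) < ε := by
        have := hzs j.toNat
        rwa [Int.toNat_of_nonneg h0] at this
      have : dist (π ((F ^ j) P)) (π ((F ^ j) z)) < cf :=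
        hmod (lt_of_lt_of_le hdq hεε₁)
      rw [dist_comm] at this
      exact absurd hj (not_lt.mpr this.le)
    · set m : ℕ := (-j).toNat with hmdef
      have hmj : -(m : ℤ) = j := by
        rw [hmdef, Int.toNat_of_nonneg (by omega)]; ring
      have hdq : dist ((F ^ j) P') ((F ^ j) z) < ε := by
        have := hzu m
        rwa [hmj] at this
      have h1 : dist (π ((F ^ j) P')) (π ((F ^ j) z)) < cf :=
        hmod (lt_of_lt_of_le hdq hεε₁)
      have h2 : π ((F ^ j) P') = π ((F ^ j) P) := by
        rw [hsemi j P', hsemi j P, hqq]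
      rw [h2, dist_comm] at h1
      exact absurd hj (not_lt.mpr h1.le)
  -- π (F^(kN) P) = π P for any multiple of the period
  have hfibmem : ∀ k : ℕ, π ((F ^ ((k : ℤ) * (N : ℤ))) z) = π P := by
    intro k
    rw [hsemi, hπz, ← hsemi, per_mul F hPN (k : ℤ)]
  -- injectivity of k ↦ F^(kN) z
  have hinj2 : ∀ a b : ℕ, a < b →
      (F ^ ((a : ℤ) * (N : ℤ))) z = (F ^ ((b : ℤ) * (N : ℤ))) z → False := by
    intro a b hab heq
    set M : ℤ := ((b : ℤ) - (a : ℤ)) * (N : ℤ) with hMdef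
    have hM1 : (1 : ℤ) ≤ M := by
      have h1 : (1 : ℤ) ≤ (N : ℤ) := by exact_mod_cast hN
      have h2 : (1 : ℤ) ≤ (b : ℤ) - (a : ℤ) := by omega
      nlinarith
    have hzM : (F ^ M) z = z := by
      have h1 : (F ^ (-((a : ℤ) * (N : ℤ)))) ((F ^ ((a : ℤ) * (N : ℤ))) z)
          = (F ^ (-((a : ℤ) * (N : ℤ)))) ((F ^ ((b : ℤ) * (N : ℤ))) z) := by rw [heq]
      rw [← zpow_add_apply, ← zpow_add_apply] at h1
      have e1 : -((a : ℤ) * (N : ℤ)) + (a : ℤ) * (N : ℤ) = 0 := by ring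
      have e2 : -((a : ℤ) * (N : ℤ)) + (b : ℤ) * (N : ℤ) = M := by rw [hMdef]; ring
      rw [e1, e2] at h1
      simpa using h1.symm
    have hPM : (F ^ M) P = P := per_mul F hPN ((b : ℤ) - (a : ℤ))
    apply hzP
    apply eq_of_not_expansive hEF
    intro j hj
    set t : ℤ := (j.natAbs : ℤ) with htdef
    have htM : 0 ≤ j + t * M := by
      have h2 : -j ≤ t := by rw [htdef]; omega
      have h3 : (0 : ℤ) ≤ t := by rw [htdef]; omega
      nlinarith
    have hredz : (F ^ j) z = (F ^ (j + t * M)) z := by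
      rw [zpow_add_apply, per_mul F hzM t]
    have hredP : (F ^ j) P = (F ^ (j + t * M)) P := by
      rw [zpow_add_apply, per_mul F hPM t]
    rw [hredz, hredP] at hj
    have := hzs (j + t * M).toNat
    rw [Int.toNat_of_nonneg htM] at this
    rw [dist_comm] at hj
    exact absurd hj (not_lt.mpr (le_trans this.le hεcF))
  -- conclude
  refine ⟨π P, Set.infinite_of_injective_forall_mem
    (f := fun k : ℕ => (F ^ ((k : ℤ) * (N : ℤ))) z) ?_ ?_⟩
  · intro a b hab
    by_contra hne'
    rcases lt_trichotomy a b with h | h | h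
    · exact hinj2 a b h hab
    · exact hne' h
    · exact hinj2 b a h hab.symm
  · intro k
    simpa using hfibmem k
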